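/- Let P = [p_{ijk}] be a real 2×2×2 tensor. Define the hyperdeterminant Det(P) = 4p_{111}p_{122}p_{212}p_{221} + 4p_{112}p_{121}p_{211}p_{222} + p_{111}²p_{222}² + p_{122}²p_{211}² + p_{112}²p_{221}² + p_{121}²p_{212}² − 2p_{111}p_{112}p_{221}p_{222} − 2p_{111}p_{121}p_{212}p_{222} − 2p_{111}p_{122}p_{211}p_{222} − 2p_{112}p_{121}p_{212}p_{221} − 2p_{112}p_{122}p_{211}p_{221} − 2p_{121}p_{122}p_{211}p_{212}. With U_{12}, U_{13}, U_{23} the determinants of the three 2×2 marginal matrices (summing over the third, second, first index respectively), p_{+++} the sum of all eight entries, and μ = p_{+++}²p_{222} − p_{+++}(p_{2++}p_{+22} + p_{+2+}p_{2+2} + p_{++2}p_{22+}) + 2p_{2++}p_{+2+}p_{++2}, the identity p_{+++}² · Det(P) = μ² + 4·U_{12}U_{13}U_{23} holds. -/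
import Mathlib


/-- the hyperdeterminant identity p+++² · Det(P) = μ² + 4·U12·U13·U23. -/
theorem stmt_7
    (p111 p112 p121 p122 p211 p212 p221 p222 : ℝ) :
    (p111 + p112 + p121 + p122 + p211 + p212 + p221 + p222) ^ 2 *
      (4 * p111 * p122 * p212 * p221 + 4 * p112 * p121 * p211 * p222 +
        p111 ^ 2 * p222 ^ 2 + p122 ^ 2 * p211 ^ 2 + p112 ^ 2 * p221 ^ 2 +
        p121 ^ 2 * p212 ^ 2 -
        2 * p111 * p112 * p221 * p222 - 2 * p111 * p121 * p212 * p222 -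
        2 * p111 * p122 * p211 * p222 - 2 * p112 * p121 * p212 * p221 -
        2 * p112 * p122 * p211 * p221 - 2 * p121 * p122 * p211 * p212) =
    ((p111 + p112 + p121 + p122 + p211 + p212 + p221 + p222) ^ 2 * p222 -
      (p111 + p112 + p121 + p122 + p211 + p212 + p221 + p222) *
        ((p211 + p212 + p221 + p222) * (p122 + p222) +
         (p121 + p122 + p221 + p222) * (p212 + p222) +
         (p112 + p122 + p212 + p222) * (p221 + p222)) +
      2 * (p211 + p212 + p221 + p222) * (p121 + p122 + p221 + p222) *
        (p112 + p122 + p212 + p222)) ^ 2 +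
    4 * ((p111 + p112) * (p221 + p222) - (p121 + p122) * (p211 + p212)) *
        ((p111 + p121) * (p212 + p222) - (p112 + p122) * (p211 + p221)) *
        ((p111 + p211) * (p122 + p222) - (p112 + p212) * (p121 + p221)) := by
  ring
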